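/- If T and T' are bicentroidal free trees with fws(T) = fws(T'), then T and T' are isomorphic as free trees. -/

import Mathlib

inductive OTree : Type
  | node : List OTree → OTree

namespace OTree

def size : OTree → ℕ
  | .node cs => (cs.attach.map (fun c => size c.1)).sum + 1
decreasing_by simp only [OTree.node.sizeOf_spec]; have := List.sizeOf_lt_of_mem c.2; omega

def ws : OTree → List ℕ
  | .node cs => size (.node cs) :: (cs.attach.map (fun c => ws c.1)).flatten
decreasing_by simp only [OTree.node.sizeOf_spec]; have := List.sizeOf_lt_of_mem c.2; omega

def preorder : OTree → List OTree
  | .node cs => .node cs :: (cs.attach.map (fun c => preorder c.1)).flatten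
decreasing_by simp only [OTree.node.sizeOf_spec]; have := List.sizeOf_lt_of_mem c.2; omega

lemma size_pos (R : OTree) : 0 < R.size := by
  cases R with | node cs => simp only [OTree.size]; omega

end OTree

inductive RIso : OTree → OTree → Prop
  | node {cs cs' : List OTree} (l : List OTree) (hp : l.Perm cs')
      (hlen : cs.length = l.length)
      (h : ∀ (i : ℕ) (h1 : i < cs.length) (h2 : i < l.length), RIso cs[i] l[i]) :
      RIso (.node cs) (.node cs')

inductive Canonical : OTree → Prop
  | node {cs : List OTree}
      (hchain : List.Chain' (fun u v => OTree.ws v ≤ OTree.ws u) cs)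
      (h : ∀ c ∈ cs, Canonical c) : Canonical (.node cs)

def Centroidal {V : Type} [Fintype V] (G : SimpleGraph V) (u : V) : Prop :=
  ∀ v : ↥{x : V | x ≠ u},
    2 * Nat.card {w : ↥{x : V | x ≠ u} | (G.induce {x : V | x ≠ u}).Reachable v w}
      ≤ Fintype.card V

def IsParent (w : List ℕ) (i j : ℕ) : Prop :=
  i < j ∧ j < i + w.getD i 0 ∧ ∀ k, i < k → k < j → ¬ (j < k + w.getD k 0)

def graphOf (R : OTree) : SimpleGraph (Fin R.size) :=
  SimpleGraph.fromRel (fun i j => IsParent R.ws i.1 j.1)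

def rootIdx (R : OTree) : Fin R.size := ⟨0, R.size_pos⟩

def B (n : ℕ) : Set (List ℕ) := {s | ∃ R : OTree, Canonical R ∧ R.size = n ∧ R.ws = s}

def Succeq (s t : List ℕ) : Prop := t ≤ s ∨ s <+: t

def A (q n : ℕ) : Set (List ℕ × List ℕ) :=
  {p | p.1 ∈ B q ∧ p.2 ∈ B (n - q) ∧ Succeq p.1 p.2.tail}

def FwsUni {V : Type} [Fintype V] (G : SimpleGraph V) (s : List ℕ) : Prop :=
  ∃ R : OTree, Canonical R ∧ R.ws = s ∧
    ∃ f : graphOf R ≃g G, Centroidal G (f (rootIdx R))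

def FwsBi {V : Type} [Fintype V] (G : SimpleGraph V) (s : List ℕ) : Prop :=
  ∃ u v, u ≠ v ∧ G.Adj u v ∧ Centroidal G u ∧ Centroidal G v ∧
  ∃ A B : OTree, Canonical A ∧ Canonical B ∧ B.ws ≤ A.ws ∧ s = A.ws ++ B.ws ∧
  ∃ (fA : graphOf A ≃g (G.deleteEdges {s(u,v)}).induce
        {x | (G.deleteEdges {s(u,v)}).Reachable u x})
    (fB : graphOf B ≃g (G.deleteEdges {s(u,v)}).induce
        {x | (G.deleteEdges {s(u,v)}).Reachable v x}),
    (fA (rootIdx A)).1 = u ∧ (fB (rootIdx B)).1 = v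

namespace OTree

lemma size_node (cs : List OTree) : size (.node cs) = (cs.map size).sum + 1 := by
  rw [size, List.attach_map_val]

lemma ws_node (cs : List OTree) : ws (.node cs) = size (.node cs) :: (cs.map ws).flatten := by
  rw [ws, List.attach_map_val]

lemma ws_length : ∀ R : OTree, R.ws.length = R.size
  | .node cs => by
    rw [ws_node, size_node, List.length_cons, List.length_flatten, List.map_map]
    have : cs.map (List.length ∘ ws) = cs.map size :=
      List.map_congr_left fun c hc => ws_length c
    simp only [Function.comp_def] at this ⊢
    rw [this]
decreasing_by simp only [OTree.node.sizeOf_spec]; have := List.sizeOf_lt_of_mem hc; omega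

lemma ws_head? (R : OTree) : R.ws.head? = some R.size := by
  cases R with | node cs => rw [ws_node]; rfl

lemma ws_ne_nil (R : OTree) : R.ws ≠ [] := by
  cases R with | node cs => rw [ws_node]; simp

lemma flatten_inj : ∀ cs cs' : List OTree,
    (∀ c ∈ cs, ∀ t : OTree, c.ws = t.ws → c = t) →
    (cs.map ws).flatten = (cs'.map ws).flatten → cs = cs'
  | [], [], _, _ => rfl
  | [], c' :: cs', _, h => by
    exfalso
    simp only [List.map_nil, List.flatten_nil, List.map_cons, List.flatten_cons] at h
    exact ws_ne_nil c' (List.append_eq_nil_iff.mp h.symm).1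
  | c :: cs, [], _, h => by
    exfalso
    simp only [List.map_nil, List.flatten_nil, List.map_cons, List.flatten_cons] at h
    exact ws_ne_nil c (List.append_eq_nil_iff.mp h).1
  | c :: cs, c' :: cs', hinj, h => by
    simp only [List.map_cons, List.flatten_cons] at h
    have hsz : c.size = c'.size := by
      have h0 := congrArg List.head? h
      rw [List.head?_append, List.head?_append] at h0
      rw [ws_head?, ws_head?] at h0
      simpa using h0
    have hlen : c.ws.length = c'.ws.length := by rw [ws_length, ws_length, hsz]
    obtain ⟨h1, h2⟩ := List.append_inj h hlen
    have hc : c = c' := hinj c (by simp) c' h1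
    have hcs : cs = cs' := flatten_inj cs cs' (fun x hx => hinj x (by simp [hx])) h2
    rw [hc, hcs]

lemma ws_inj_aux : ∀ n, ∀ R R' : OTree, R.size ≤ n → R.ws = R'.ws → R = R' := by
  intro n
  induction n with
  | zero => intro R R' hle; cases R with | node cs => rw [size_node] at hle; omega
  | succ n ih =>
    rintro ⟨cs⟩ ⟨cs'⟩ hle h
    rw [ws_node, ws_node] at h
    simp only [List.cons.injEq] at h
    have : cs = cs' := by
      refine flatten_inj cs cs' (fun c hc t ht => ih c t ?_ ht) h.2
      have : c.size ≤ (cs.map size).sum := List.single_le_sum (by simp) _ (List.mem_map_of_mem hc)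
      rw [size_node] at hle; omega
    rw [this]

lemma ws_inj {R R' : OTree} (h : R.ws = R'.ws) : R = R' :=
  ws_inj_aux R.size R R' le_rfl h

lemma ws_split_half {A A' B B' : OTree} (hlen : A.ws.length ≤ A'.ws.length)
    (h : A.ws ++ B.ws = A'.ws ++ B'.ws) : A.ws = A'.ws := by
  have hpre : A.ws <+: A'.ws := List.prefix_of_prefix_length_le ⟨_, h⟩ ⟨_, rfl⟩ hlen
  obtain ⟨t, ht⟩ := hpre
  have hhd : A.ws.head? = A'.ws.head? := by
    rw [← ht, List.head?_append, ws_head?]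
    rfl
  rw [ws_head?, ws_head?] at hhd
  have hsz : A.size = A'.size := by simpa using hhd
  have : A.ws.length = A'.ws.length := by rw [ws_length, ws_length, hsz]
  exact (List.append_inj h this).1

end OTree

open SimpleGraph in
lemma tree_not_reach {V : Type} {G : SimpleGraph V} (hG : G.IsTree) {u v : V} (huv : G.Adj u v) :
    ¬ (G.deleteEdges {s(u,v)}).Reachable u v :=
  (SimpleGraph.isBridge_iff.mp ((SimpleGraph.isAcyclic_iff_forall_adj_isBridge.mp hG.2) huv))

open SimpleGraph in
lemma tree_cover {V : Type} {G : SimpleGraph V} (hc : G.Connected) (u v x : V) :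
    (G.deleteEdges {s(u,v)}).Reachable u x ∨ (G.deleteEdges {s(u,v)}).Reachable v x := by
  obtain ⟨p⟩ := hc.preconnected u x
  suffices H : ∀ (a b : V) (_ : G.Walk a b),
      ((G.deleteEdges {s(u,v)}).Reachable u a ∨ (G.deleteEdges {s(u,v)}).Reachable v a) →
      ((G.deleteEdges {s(u,v)}).Reachable u b ∨ (G.deleteEdges {s(u,v)}).Reachable v b) by
    exact H u x p (Or.inl (Reachable.refl u))
  intro a b p
  induction p with
  | nil => exact id
  | @cons a c b h q ih =>
    intro hab
    apply ih
    by_cases he : s(a, c) = s(u, v)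
    · rw [Sym2.eq_iff] at he
      rcases he with ⟨rfl, rfl⟩ | ⟨rfl, rfl⟩
      · exact Or.inr (Reachable.refl _)
      · exact Or.inl (Reachable.refl _)
    · have hD : (G.deleteEdges {s(u,v)}).Adj a c := by
        rw [SimpleGraph.deleteEdges_adj]
        exact ⟨h, by simpa using he⟩
      rcases hab with h1 | h1
      · exact Or.inl (h1.trans hD.reachable)
      · exact Or.inr (h1.trans hD.reachable)

lemma reach_adj_iff {V : Type} {G : SimpleGraph V} {u v w x y : V}
    (hnr : ¬ (G.deleteEdges {s(u,v)}).Reachable u v)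
    (hx : (G.deleteEdges {s(u,v)}).Reachable w x)
    (hy : (G.deleteEdges {s(u,v)}).Reachable w y) :
    G.Adj x y ↔ (G.deleteEdges {s(u,v)}).Adj x y := by
  constructor
  · intro h
    rw [SimpleGraph.deleteEdges_adj]
    refine ⟨h, ?_⟩
    intro hmem
    simp only [Set.mem_singleton_iff, Sym2.eq_iff] at hmem
    rcases hmem with ⟨rfl, rfl⟩ | ⟨rfl, rfl⟩
    · exact hnr (hx.symm.trans hy)
    · exact hnr (hy.symm.trans hx)
  · exact fun h => (SimpleGraph.deleteEdges_adj.mp h).1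

lemma cross_adj_iff {V : Type} {G : SimpleGraph V} {u v x y : V} (huv : G.Adj u v)
    (hnr : ¬ (G.deleteEdges {s(u,v)}).Reachable u v)
    (hx : (G.deleteEdges {s(u,v)}).Reachable u x)
    (hy : (G.deleteEdges {s(u,v)}).Reachable v y) :
    G.Adj x y ↔ (x = u ∧ y = v) := by
  constructor
  · intro h
    by_cases he : s(x, y) = s(u, v)
    · rw [Sym2.eq_iff] at he
      rcases he with ⟨rfl, rfl⟩ | ⟨rfl, rfl⟩
      · exact ⟨rfl, rfl⟩
      · exact absurd hy.symm hnr
    · have hD : (G.deleteEdges {s(u,v)}).Adj x y := by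
        rw [SimpleGraph.deleteEdges_adj]
        exact ⟨h, by simpa using he⟩
      exact absurd (((hx.trans hD.reachable).trans hy.symm)) hnr
  · rintro ⟨rfl, rfl⟩; exact huv

open SimpleGraph in
lemma glue_iso {V V' : Type} {G : SimpleGraph V} {G' : SimpleGraph V'}
    (hG : G.IsTree) (hG' : G'.IsTree) {u v : V} {u' v' : V'}
    (huv : G.Adj u v) (huv' : G'.Adj u' v')
    (g1 : (G.deleteEdges {s(u,v)}).induce {x | (G.deleteEdges {s(u,v)}).Reachable u x} ≃g
          (G'.deleteEdges {s(u',v')}).induce {x | (G'.deleteEdges {s(u',v')}).Reachable u' x})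
    (g2 : (G.deleteEdges {s(u,v)}).induce {x | (G.deleteEdges {s(u,v)}).Reachable v x} ≃g
          (G'.deleteEdges {s(u',v')}).induce {x | (G'.deleteEdges {s(u',v')}).Reachable v' x})
    (hr1 : (g1 ⟨u, Reachable.refl u⟩).1 = u')
    (hr2 : (g2 ⟨v, Reachable.refl v⟩).1 = v') :
    Nonempty (G ≃g G') := by
  classical
  have hnr : ¬ (G.deleteEdges {s(u,v)}).Reachable u v := tree_not_reach hG huv
  have hnr' : ¬ (G'.deleteEdges {s(u',v')}).Reachable u' v' := tree_not_reach hG' huv'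
  have hcov : ∀ x, (G.deleteEdges {s(u,v)}).Reachable u x ∨ (G.deleteEdges {s(u,v)}).Reachable v x :=
    tree_cover hG.1 u v
  have hcov' : ∀ x, (G'.deleteEdges {s(u',v')}).Reachable u' x ∨ (G'.deleteEdges {s(u',v')}).Reachable v' x :=
    tree_cover hG'.1 u' v'
  have hdisj : ∀ x, (G.deleteEdges {s(u,v)}).Reachable u x → (G.deleteEdges {s(u,v)}).Reachable v x → False :=
    fun x h1 h2 => hnr (h1.trans h2.symm)
  have hdisj' : ∀ x, (G'.deleteEdges {s(u',v')}).Reachable u' x → (G'.deleteEdges {s(u',v')}).Reachable v' x → False :=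
    fun x h1 h2 => hnr' (h1.trans h2.symm)
  let φ : V → V' := fun x =>
    if hx : (G.deleteEdges {s(u,v)}).Reachable u x then (g1 ⟨x, hx⟩).1
    else (g2 ⟨x, (hcov x).resolve_left hx⟩).1
  let ψ : V' → V := fun x =>
    if hx : (G'.deleteEdges {s(u',v')}).Reachable u' x then (g1.symm ⟨x, hx⟩).1
    else (g2.symm ⟨x, (hcov' x).resolve_left hx⟩).1
  have hφ1 : ∀ x (hx : (G.deleteEdges {s(u,v)}).Reachable u x), φ x = (g1 ⟨x, hx⟩).1 :=
    fun x hx => dif_pos hx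
  have hφ2 : ∀ x (hx : (G.deleteEdges {s(u,v)}).Reachable v x), φ x = (g2 ⟨x, hx⟩).1 := by
    intro x hx
    have hnx : ¬ (G.deleteEdges {s(u,v)}).Reachable u x := fun h => hdisj x h hx
    exact dif_neg hnx
  have hψ1 : ∀ x (hx : (G'.deleteEdges {s(u',v')}).Reachable u' x), ψ x = (g1.symm ⟨x, hx⟩).1 :=
    fun x hx => dif_pos hx
  have hψ2 : ∀ x (hx : (G'.deleteEdges {s(u',v')}).Reachable v' x), ψ x = (g2.symm ⟨x, hx⟩).1 := by
    intro x hx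
    have hnx : ¬ (G'.deleteEdges {s(u',v')}).Reachable u' x := fun h => hdisj' x h hx
    exact dif_neg hnx
  have hli : Function.LeftInverse ψ φ := by
    intro x
    by_cases hx : (G.deleteEdges {s(u,v)}).Reachable u x
    · rw [hφ1 x hx]
      have hm : (G'.deleteEdges {s(u',v')}).Reachable u' (g1 ⟨x, hx⟩).1 := (g1 ⟨x, hx⟩).2
      rw [hψ1 _ hm]
      have : (⟨(g1 ⟨x, hx⟩).1, hm⟩ : {x | (G'.deleteEdges {s(u',v')}).Reachable u' x}) = g1 ⟨x, hx⟩ := rfl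
      rw [this, RelIso.symm_apply_apply]
    · have hx2 := (hcov x).resolve_left hx
      rw [hφ2 x hx2]
      have hm : (G'.deleteEdges {s(u',v')}).Reachable v' (g2 ⟨x, hx2⟩).1 := (g2 ⟨x, hx2⟩).2
      rw [hψ2 _ hm]
      have : (⟨(g2 ⟨x, hx2⟩).1, hm⟩ : {x | (G'.deleteEdges {s(u',v')}).Reachable v' x}) = g2 ⟨x, hx2⟩ := rfl
      rw [this, RelIso.symm_apply_apply]
  have hri : Function.RightInverse ψ φ := by
    intro x
    by_cases hx : (G'.deleteEdges {s(u',v')}).Reachable u' x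
    · rw [hψ1 x hx]
      have hm : (G.deleteEdges {s(u,v)}).Reachable u (g1.symm ⟨x, hx⟩).1 := (g1.symm ⟨x, hx⟩).2
      rw [hφ1 _ hm]
      have : (⟨(g1.symm ⟨x, hx⟩).1, hm⟩ : {x | (G.deleteEdges {s(u,v)}).Reachable u x}) = g1.symm ⟨x, hx⟩ := rfl
      rw [this, RelIso.apply_symm_apply]
    · have hx2 := (hcov' x).resolve_left hx
      rw [hψ2 x hx2]
      have hm : (G.deleteEdges {s(u,v)}).Reachable v (g2.symm ⟨x, hx2⟩).1 := (g2.symm ⟨x, hx2⟩).2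
      rw [hφ2 _ hm]
      have : (⟨(g2.symm ⟨x, hx2⟩).1, hm⟩ : {x | (G.deleteEdges {s(u,v)}).Reachable v x}) = g2.symm ⟨x, hx2⟩ := rfl
      rw [this, RelIso.apply_symm_apply]
  have key1 : ∀ z (hz : (G.deleteEdges {s(u,v)}).Reachable u z), ((g1 ⟨z, hz⟩).1 = u' ↔ z = u) := by
    intro z hz
    constructor
    · intro hzz
      have h1 : g1 ⟨z, hz⟩ = g1 ⟨u, Reachable.refl u⟩ := Subtype.ext (hzz.trans hr1.symm)
      exact congrArg Subtype.val (g1.injective h1)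
    · rintro rfl; exact hr1
  have key2 : ∀ z (hz : (G.deleteEdges {s(u,v)}).Reachable v z), ((g2 ⟨z, hz⟩).1 = v' ↔ z = v) := by
    intro z hz
    constructor
    · intro hzz
      have h1 : g2 ⟨z, hz⟩ = g2 ⟨v, Reachable.refl v⟩ := Subtype.ext (hzz.trans hr2.symm)
      exact congrArg Subtype.val (g2.injective h1)
    · rintro rfl; exact hr2
  refine ⟨⟨⟨φ, ψ, hli, hri⟩, ?_⟩⟩
  intro x y
  show G'.Adj (φ x) (φ y) ↔ G.Adj x y
  by_cases hx : (G.deleteEdges {s(u,v)}).Reachable u x <;>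
    by_cases hy : (G.deleteEdges {s(u,v)}).Reachable u y
  · rw [hφ1 x hx, hφ1 y hy]
    have hx' := (g1 ⟨x, hx⟩).2
    have hy' := (g1 ⟨y, hy⟩).2
    rw [reach_adj_iff hnr' hx' hy', reach_adj_iff hnr hx hy]
    exact g1.map_rel_iff (a := ⟨x, hx⟩) (b := ⟨y, hy⟩)
  · have hy2 := (hcov y).resolve_left hy
    rw [hφ1 x hx, hφ2 y hy2]
    have hx' := (g1 ⟨x, hx⟩).2
    have hy' := (g2 ⟨y, hy2⟩).2
    rw [cross_adj_iff huv' hnr' hx' hy', cross_adj_iff huv hnr hx hy2,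
      key1 x hx, key2 y hy2]
  · have hx2 := (hcov x).resolve_left hx
    rw [hφ2 x hx2, hφ1 y hy]
    have hx' := (g2 ⟨x, hx2⟩).2
    have hy' := (g1 ⟨y, hy⟩).2
    rw [G'.adj_comm, G.adj_comm]
    rw [cross_adj_iff huv' hnr' hy' hx', cross_adj_iff huv hnr hy hx2,
      key1 y hy, key2 x hx2]
  · have hx2 := (hcov x).resolve_left hx
    have hy2 := (hcov y).resolve_left hy
    rw [hφ2 x hx2, hφ2 y hy2]
    have hx' := (g2 ⟨x, hx2⟩).2
    have hy' := (g2 ⟨y, hy2⟩).2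
    rw [reach_adj_iff hnr' hx' hy', reach_adj_iff hnr hx2 hy2]
    exact g2.map_rel_iff (a := ⟨x, hx2⟩) (b := ⟨y, hy2⟩)

theorem stmt11 {V V' : Type} [Fintype V] [Fintype V']
    (G : SimpleGraph V) (G' : SimpleGraph V') (hG : G.IsTree) (hG' : G'.IsTree)
    (s : List ℕ) (h : FwsBi G s) (h' : FwsBi G' s) : Nonempty (G ≃g G') := by
  obtain ⟨u, v, hne, huv, _, _, A1, B1, _, _, _, hs, fA, fB, hfAr, hfBr⟩ := h
  obtain ⟨u', v', hne', huv', _, _, A2, B2, _, _, _, hs', fA', fB', hfAr', hfBr'⟩ := h'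
  have heq : A1.ws ++ B1.ws = A2.ws ++ B2.ws := by rw [← hs, ← hs']
  have hAeq : A1.ws = A2.ws := by
    rcases le_total A1.ws.length A2.ws.length with hl | hl
    · exact OTree.ws_split_half hl heq
    · exact (OTree.ws_split_half hl heq.symm).symm
  have hA : A1 = A2 := OTree.ws_inj hAeq
  have hB : B1 = B2 := OTree.ws_inj (List.append_cancel_left (hAeq ▸ heq))
  subst hA hB
  have hg1 : ((fA.symm.trans fA') ⟨u, SimpleGraph.Reachable.refl u⟩).1 = u' := by
    have h0 : fA (rootIdx A1) = ⟨u, SimpleGraph.Reachable.refl u⟩ := Subtype.ext hfAr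
    show (fA' (fA.symm ⟨u, SimpleGraph.Reachable.refl u⟩)).1 = u'
    rw [← h0, RelIso.symm_apply_apply]
    exact hfAr'
  have hg2 : ((fB.symm.trans fB') ⟨v, SimpleGraph.Reachable.refl v⟩).1 = v' := by
    have h0 : fB (rootIdx B1) = ⟨v, SimpleGraph.Reachable.refl v⟩ := Subtype.ext hfBr
    show (fB' (fB.symm ⟨v, SimpleGraph.Reachable.refl v⟩)).1 = v'
    rw [← h0, RelIso.symm_apply_apply]
    exact hfBr'
  exact glue_iso hG hG' huv huv' (fA.symm.trans fA') (fB.symm.trans fB') hg1 hg2
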